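/- If two free quandles FQ(S) and FQ(T) are isomorphic as quandles, then |S| = |T|. -/

import Mathlib

open Quandles

/-- The free rack on a set `S`: pairs `(a, w)` (thought of as the conjugate
`w a w⁻¹` of the generator `a`), following Fenn–Rourke. -/
def FreeRack (S : Type u) : Type u := S × FreeGroup S

namespace FreeRack

variable {S : Type u}

/-- The element of the free group represented by the pair `(a, w)`,
namely the conjugate `w a w⁻¹` of the generator `a`. -/
def toGroup (x : FreeRack S) : FreeGroup S := x.2 * FreeGroup.of x.1 * x.2⁻¹

instance : Rack (FreeRack S) where
  act x y := (y.1, toGroup x * y.2)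
  self_distrib := by
    rintro ⟨a, w⟩ ⟨b, u⟩ ⟨c, v⟩
    refine Prod.ext rfl ?_
    show toGroup (a, w) * (toGroup (b, u) * v)
        = toGroup (b, toGroup (a, w) * u) * (toGroup (a, w) * v)
    simp only [toGroup]
    group
  invAct x y := (y.1, (toGroup x)⁻¹ * y.2)
  left_inv x y := by
    refine Prod.ext rfl ?_
    show (toGroup x)⁻¹ * (toGroup x * y.2) = y.2
    group
  right_inv x y := by
    refine Prod.ext rfl ?_
    show toGroup x * ((toGroup x)⁻¹ * y.2) = y.2
    group

/-- The defining relation of the free quandle as a quotient of the free rack: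
`(a, w) ~ (a, w · a)`. -/
def rel (p q : FreeRack S) : Prop := q = (p.1, p.2 * FreeGroup.of p.1)

theorem toGroup_of_rel {p q : FreeRack S} (h : rel p q) : toGroup p = toGroup q := by
  subst h
  rcases p with ⟨a, w⟩
  simp only [toGroup]
  group

theorem toGroup_of_eqvGen {p q : FreeRack S} (h : Relation.EqvGen rel p q) :
    toGroup p = toGroup q := by
  induction h with
  | rel a b hab => exact toGroup_of_rel hab
  | refl a => rfl
  | symm a b _ ih => exact ih.symm
  | trans a b c _ _ ih1 ih2 => exact ih1.trans ih2

theorem fst_of_eqvGen {p q : FreeRack S} (h : Relation.EqvGen rel p q) : p.1 = q.1 := by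
  induction h with
  | rel a b hab => rw [hab]
  | refl a => rfl
  | symm a b _ ih => exact ih.symm
  | trans a b c _ _ ih1 ih2 => exact ih1.trans ih2

/-- The setoid generated by the relation `(a, w) ~ (a, w · a)`. -/
instance setoid (S : Type u) : Setoid (FreeRack S) :=
  ⟨Relation.EqvGen rel, Relation.EqvGen.is_equivalence rel⟩

theorem act_eqvGen_right (p : FreeRack S) {q q' : FreeRack S}
    (h : Relation.EqvGen rel q q') : Relation.EqvGen rel (p ◃ q) (p ◃ q') := by
  induction h with
  | rel a b hab =>
      refine Relation.EqvGen.rel _ _ ?_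
      rw [hab]
      refine Prod.ext rfl ?_
      show toGroup p * (a.2 * FreeGroup.of a.1) = toGroup p * a.2 * FreeGroup.of a.1
      group
  | refl a => exact Relation.EqvGen.refl _
  | symm a b _ ih => exact Relation.EqvGen.symm _ _ ih
  | trans a b c _ _ ih1 ih2 => exact Relation.EqvGen.trans _ _ _ ih1 ih2

theorem act_eq_of_eqvGen_left {p p' : FreeRack S} (q : FreeRack S)
    (h : Relation.EqvGen rel p p') : p ◃ q = p' ◃ q := by
  show (q.1, toGroup p * q.2) = (q.1, toGroup p' * q.2)
  rw [toGroup_of_eqvGen h]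

theorem invAct_eqvGen_right (p : FreeRack S) {q q' : FreeRack S}
    (h : Relation.EqvGen rel q q') : Relation.EqvGen rel (p ◃⁻¹ q) (p ◃⁻¹ q') := by
  induction h with
  | rel a b hab =>
      refine Relation.EqvGen.rel _ _ ?_
      rw [hab]
      refine Prod.ext rfl ?_
      show (toGroup p)⁻¹ * (a.2 * FreeGroup.of a.1) = (toGroup p)⁻¹ * a.2 * FreeGroup.of a.1
      group
  | refl a => exact Relation.EqvGen.refl _
  | symm a b _ ih => exact Relation.EqvGen.symm _ _ ih
  | trans a b c _ _ ih1 ih2 => exact Relation.EqvGen.trans _ _ _ ih1 ih2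

theorem invAct_eq_of_eqvGen_left {p p' : FreeRack S} (q : FreeRack S)
    (h : Relation.EqvGen rel p p') : p ◃⁻¹ q = p' ◃⁻¹ q := by
  show (q.1, (toGroup p)⁻¹ * q.2) = (q.1, (toGroup p')⁻¹ * q.2)
  rw [toGroup_of_eqvGen h]

end FreeRack

/-- The free quandle on a set `S`: the quotient of the free rack on `S` by the
equivalence relation generated by `(a, w) ~ (a, w · a)`. -/
def FreeQuandle (S : Type u) : Type u := Quotient (FreeRack.setoid S)

namespace FreeQuandle

variable {S : Type u}

instance : Quandle (FreeQuandle S) where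
  act := Quotient.map₂ Shelf.act (by
    intro p p' hp q q' hq
    calc Shelf.act p q = Shelf.act p' q := FreeRack.act_eq_of_eqvGen_left q hp
    _ ≈ Shelf.act p' q' := FreeRack.act_eqvGen_right p' hq)
  self_distrib := by
    intro x y z
    refine Quotient.inductionOn₃ x y z (fun p q r => ?_)
    exact congrArg (Quotient.mk _) Shelf.self_distrib
  invAct := Quotient.map₂ Rack.invAct (by
    intro p p' hp q q' hq
    calc Rack.invAct p q = Rack.invAct p' q := FreeRack.invAct_eq_of_eqvGen_left q hp
    _ ≈ Rack.invAct p' q' := FreeRack.invAct_eqvGen_right p' hq)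
  left_inv := by
    intro x y
    refine Quotient.inductionOn₂ x y (fun p q => ?_)
    exact congrArg (Quotient.mk _) (Rack.left_inv p q)
  right_inv := by
    intro x y
    refine Quotient.inductionOn₂ x y (fun p q => ?_)
    exact congrArg (Quotient.mk _) (Rack.right_inv p q)
  fix := by
    intro x
    refine Quotient.inductionOn x (fun p => ?_)
    refine Quotient.sound ?_
    refine Relation.EqvGen.trans _ _ _ (Relation.EqvGen.refl _) ?_
    have h : p ◃ p = (p.1, p.2 * FreeGroup.of p.1) := by
      refine Prod.ext rfl ?_
      show FreeRack.toGroup p * p.2 = p.2 * FreeGroup.of p.1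
      simp only [FreeRack.toGroup]
      group
    rw [h]
    exact Relation.EqvGen.symm _ _ (Relation.EqvGen.rel _ _ rfl)

/-- The canonical inclusion of the generating set into the free quandle. -/
def of (a : S) : FreeQuandle S := Quotient.mk _ (a, 1)

/-- The natural map from the free quandle on `S` into the conjugation quandle
of the free group on `S`, sending the class of `(a, w)` to the conjugate
`w a w⁻¹` of the generator `a`. -/
def toConj : FreeQuandle S → Quandle.Conj (FreeGroup S) :=
  Quotient.lift FreeRack.toGroup (fun _ _ h => FreeRack.toGroup_of_eqvGen h)

theorem toConj_mk (p : FreeRack S) :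
    toConj (Quotient.mk (FreeRack.setoid S) p) = FreeRack.toGroup p := rfl

theorem mk_act_mk (p q : FreeRack S) :
    @Shelf.act (FreeQuandle S) _ (Quotient.mk (FreeRack.setoid S) p)
        (Quotient.mk (FreeRack.setoid S) q)
      = Quotient.mk (FreeRack.setoid S) (p ◃ q) := rfl

theorem toConj_act (x y : FreeQuandle S) :
    toConj (x ◃ y) = toConj x * toConj y * (toConj x)⁻¹ := by
  refine Quotient.inductionOn₂ x y fun p q => ?_
  rw [mk_act_mk, toConj_mk, toConj_mk, toConj_mk]
  rcases p with ⟨a, w⟩; rcases q with ⟨b, u⟩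
  show FreeRack.toGroup (b, FreeRack.toGroup (a, w) * u) = _
  simp only [FreeRack.toGroup]
  group

theorem toConj_of (a : S) : toConj (of a) = FreeGroup.of a := by
  show FreeRack.toGroup ((a, 1) : FreeRack S) = _
  simp only [FreeRack.toGroup]
  group

/-- Left multiplication of the group label on the free quandle. -/
def mulLeft (w : FreeGroup S) : FreeQuandle S → FreeQuandle S :=
  Quotient.map (fun p => (p.1, w * p.2)) (by
    intro p q h
    induction h with
    | rel a b hab =>
        refine Relation.EqvGen.rel _ _ ?_
        rw [hab]
        exact Prod.ext rfl (mul_assoc _ _ _).symm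
    | refl a => exact Relation.EqvGen.refl _
    | symm a b _ ih => exact Relation.EqvGen.symm _ _ ih
    | trans a b c _ _ ih1 ih2 => exact Relation.EqvGen.trans _ _ _ ih1 ih2)

theorem mulLeft_mk (w : FreeGroup S) (p : FreeRack S) :
    mulLeft w (Quotient.mk (FreeRack.setoid S) p)
      = Quotient.mk (FreeRack.setoid S) (p.1, w * p.2) := rfl

theorem mulLeft_one (x : FreeQuandle S) : mulLeft 1 x = x := by
  refine Quotient.inductionOn x fun p => ?_
  rw [mulLeft_mk]
  exact congrArg _ (Prod.ext rfl (one_mul _))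

theorem mulLeft_mul (u v : FreeGroup S) (x : FreeQuandle S) :
    mulLeft (u * v) x = mulLeft u (mulLeft v x) := by
  refine Quotient.inductionOn x fun p => ?_
  show Quotient.mk (FreeRack.setoid S) ((p.1, u * v * p.2) : FreeRack S)
    = Quotient.mk (FreeRack.setoid S) ((p.1, u * (v * p.2)) : FreeRack S)
  rw [mul_assoc]

theorem mulLeft_of_gen (b : S) (x : FreeQuandle S) :
    mulLeft (FreeGroup.of b) x = of b ◃ x := by
  refine Quotient.inductionOn x fun p => ?_
  show Quotient.mk (FreeRack.setoid S) ((p.1, FreeGroup.of b * p.2) : FreeRack S)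
    = Quotient.mk (FreeRack.setoid S) (((b, 1) : FreeRack S) ◃ p)
  refine congrArg _ (Prod.ext rfl ?_)
  show FreeGroup.of b * p.2 = FreeRack.toGroup (b, 1) * p.2
  simp only [FreeRack.toGroup]
  group

theorem mulLeft_inv_gen (b : S) (x : FreeQuandle S) :
    mulLeft (FreeGroup.of b)⁻¹ x = of b ◃⁻¹ x := by
  refine Quotient.inductionOn x fun p => ?_
  rw [mulLeft_mk, of]
  show _ = Quotient.mk (FreeRack.setoid S) ((b, (1 : FreeGroup S)) ◃⁻¹ p)
  refine congrArg _ (Prod.ext rfl ?_)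
  show (FreeGroup.of b)⁻¹ * p.2 = (FreeRack.toGroup (b, 1))⁻¹ * p.2
  simp only [FreeRack.toGroup]
  group

theorem mk_eq_mulLeft_of (a : S) (w : FreeGroup S) :
    Quotient.mk (FreeRack.setoid S) (a, w) = mulLeft w (of a) := by
  show _ = Quotient.mk (FreeRack.setoid S) ((a, w * 1) : FreeRack S)
  rw [mul_one]

end FreeQuandle

section Main

open FreeQuandle

variable {S T : Type}

/-- The induced group homomorphism of a quandle morphism on free quandles. -/
def inducedHom (f : FreeQuandle S → FreeQuandle T) : FreeGroup S →* FreeGroup T :=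
  FreeGroup.lift fun a => toConj (f (FreeQuandle.of a))

theorem inv_act (e : FreeQuandle S ≃ FreeQuandle T)
    (he : ∀ x y : FreeQuandle S, e (x ◃ y) = e x ◃ e y)
    (x y : FreeQuandle S) : e (x ◃⁻¹ y) = e x ◃⁻¹ e y := by
  have h : e x ◃ e (x ◃⁻¹ y) = e x ◃ (e x ◃⁻¹ e y) := by
    rw [← he, Rack.right_inv, Rack.right_inv]
  exact (Rack.left_cancel (e x)).mp h

theorem symm_act (e : FreeQuandle S ≃ FreeQuandle T)
    (he : ∀ x y : FreeQuandle S, e (x ◃ y) = e x ◃ e y)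
    (x y : FreeQuandle T) : e.symm (x ◃ y) = e.symm x ◃ e.symm y := by
  apply e.injective
  rw [he, e.apply_symm_apply, e.apply_symm_apply, e.apply_symm_apply]

theorem key (e : FreeQuandle S ≃ FreeQuandle T)
    (he : ∀ x y : FreeQuandle S, e (x ◃ y) = e x ◃ e y)
    (w : FreeGroup S) :
    ∀ x : FreeQuandle S,
      toConj (e (mulLeft w x)) = inducedHom e w * toConj (e x) * (inducedHom e w)⁻¹ := by
  induction w using FreeGroup.induction_on with
  | C1 => intro x; rw [mulLeft_one, map_one]; group
  | of b =>
      intro x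
      have hb : (pure b : FreeGroup S) = FreeGroup.of b := rfl
      rw [mulLeft_of_gen, he, toConj_act]
      have : inducedHom e (FreeGroup.of b) = toConj (e (FreeQuandle.of b)) :=
        FreeGroup.lift_apply_of
      rw [this]
  | inv_of b _ =>
      intro x
      have hb : (pure b : FreeGroup S) = FreeGroup.of b := rfl
      rw [mulLeft_inv_gen, inv_act e he, map_inv, inv_inv]
      have h2 : toConj (e (FreeQuandle.of b) ◃⁻¹ e x)
          = (toConj (e (FreeQuandle.of b)))⁻¹ * toConj (e x) * toConj (e (FreeQuandle.of b)) := by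
        have := toConj_act (e (FreeQuandle.of b)) (e (FreeQuandle.of b) ◃⁻¹ e x)
        rw [Rack.right_inv] at this
        rw [this]; group
      rw [h2]
      have : inducedHom e (FreeGroup.of b) = toConj (e (FreeQuandle.of b)) :=
        FreeGroup.lift_apply_of
      rw [this]
  | mul u v ihu ihv =>
      intro x
      rw [mulLeft_mul, ihu, ihv, map_mul]
      group

theorem inducedHom_of (f : FreeQuandle S → FreeQuandle T) (a : S) :
    inducedHom f (FreeGroup.of a) = toConj (f (FreeQuandle.of a)) :=
  FreeGroup.lift_apply_of

theorem toConj_e (e : FreeQuandle S ≃ FreeQuandle T)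
    (he : ∀ x y : FreeQuandle S, e (x ◃ y) = e x ◃ e y)
    (x : FreeQuandle S) : toConj (e x) = inducedHom e (toConj x) := by
  refine Quotient.inductionOn x fun p => ?_
  rcases p with ⟨a, w⟩
  have h1 : (Quotient.mk (FreeRack.setoid S) (a, w) : FreeQuandle S) = mulLeft w (of a) :=
    mk_eq_mulLeft_of a w
  have h2 : toConj (Quotient.mk (FreeRack.setoid S) (a, w) : FreeQuandle S)
      = w * FreeGroup.of a * w⁻¹ := rfl
  rw [h1] at h2
  rw [h1, key e he, h2, map_mul, map_mul, map_inv, inducedHom_of]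

end Main

/-- If two free quandles are isomorphic, then their generating sets have the
same cardinality. -/
theorem freeQuandle_rank_well_defined (S T : Type)
    (e : FreeQuandle S ≃ FreeQuandle T)
    (he : ∀ x y : FreeQuandle S, e (x ◃ y) = e x ◃ e y) :
    Nonempty (S ≃ T) := by
  have hsymm := symm_act e he
  set g := inducedHom (⇑e) with hg
  set g' := inducedHom (⇑e.symm) with hg'
  have hga : ∀ a : S, g (FreeGroup.of a) = FreeQuandle.toConj (e (FreeQuandle.of a)) :=
    fun a => FreeGroup.lift_apply_of
  have hgb : ∀ b : T, g' (FreeGroup.of b) = FreeQuandle.toConj (e.symm (FreeQuandle.of b)) :=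
    fun b => FreeGroup.lift_apply_of
  have h1 : g'.comp g = MonoidHom.id _ := by
    apply FreeGroup.ext_hom
    intro a
    rw [MonoidHom.comp_apply, MonoidHom.id_apply, hga, ← toConj_e e.symm hsymm,
      Equiv.symm_apply_apply, FreeQuandle.toConj_of]
  have h2 : g.comp g' = MonoidHom.id _ := by
    apply FreeGroup.ext_hom
    intro b
    rw [MonoidHom.comp_apply, MonoidHom.id_apply, hgb, ← toConj_e e he,
      Equiv.apply_symm_apply, FreeQuandle.toConj_of]
  exact ⟨Equiv.ofFreeGroupEquiv (MonoidHom.toMulEquiv g g' h1 h2)⟩
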